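/- Every closed walk in the base of a finite graph covering has a multiple that lifts to a closed walk: let p : G̃ → G be a covering of simple graphs, let x be a vertex of G whose fiber p⁻¹(x) is finite and nonempty, and let w be a closed walk in G based at x. Then for every x̃ ∈ p⁻¹(x) there exists an integer N ≥ 1 such that the N-fold concatenation of w with itself lifts to a closed walk in G̃ based at x̃ (a walk from x̃ to x̃ whose image under p is the N-fold concatenation of w). -/

import Mathlib

/-- A graph homomorphism `p : G' →g G` is a covering if, for every vertex `x` of `G'`, `p`
restricts to a bijection from the neighbors of `x` onto the neighbors of `p x`. -/
def IsGraphCovering {V W : Type*} {G' : SimpleGraph V} {G : SimpleGraph W}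
    (p : G' →g G) : Prop :=
  ∀ x : V, Set.BijOn p (G'.neighborSet x) (G.neighborSet (p x))

/-- The `n`-fold concatenation of a closed walk with itself. -/
def walkPow {V : Type*} {G : SimpleGraph V} {x : V} (w : G.Walk x x) : ℕ → G.Walk x x
  | 0 => SimpleGraph.Walk.nil
  | n + 1 => (walkPow w n).append w

open SimpleGraph

/-- Existence of lifts of walks along a covering. -/
lemma stmt10_lift_ex {V W : Type*} {G' : SimpleGraph V} {G : SimpleGraph W}
    (p : G' →g G) (hp : IsGraphCovering p) :
    ∀ {a b : W} (w : G.Walk a b) (x' : V) (hx' : p x' = a),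
    ∃ (y' : V) (hy' : p y' = b) (w' : G'.Walk x' y'),
      w'.map p = w.copy hx'.symm hy'.symm := by
  intro a b w
  induction w with
  | nil =>
    intro x' hx'
    subst hx'
    exact ⟨x', rfl, .nil, by simp⟩
  | @cons a c b h q ih =>
    intro x' hx'
    subst hx'
    have hc : c ∈ G.neighborSet (p x') := h
    obtain ⟨u, hu, hpu⟩ := (hp x').surjOn hc
    obtain ⟨y', hy', w', hw'⟩ := ih u hpu
    subst hpu; subst hy'
    refine ⟨y', rfl, Walk.cons hu w', ?_⟩
    simp only [Walk.map_cons, Walk.copy_rfl_rfl] at *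
    subst hw'; rfl

/-- Lifts of the same walk starting at the same point have the same endpoint. -/
lemma stmt10_lift_unique {V W : Type*} {G' : SimpleGraph V} {G : SimpleGraph W}
    (p : G' →g G) (hp : IsGraphCovering p) :
    ∀ {x' y₁ y₂ : V} (w₁ : G'.Walk x' y₁) (w₂ : G'.Walk x' y₂),
      w₁.support.map p = w₂.support.map p → y₁ = y₂ := by
  intro x' y₁ y₂ w₁
  induction w₁ with
  | nil =>
    intro w₂ h
    cases w₂ with
    | nil => rfl
    | cons h' q => simp [Walk.support_cons] at h
  | @cons a u₁ b h₁ q₁ ih =>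
    intro w₂ h
    cases w₂ with
    | nil => simp [Walk.support_cons] at h
    | @cons _ u₂ _ h₂ q₂ =>
      simp only [Walk.support_cons, List.map_cons, List.cons.injEq] at h
      obtain ⟨-, htail⟩ := h
      have hu : p u₁ = p u₂ := by
        rw [q₁.support_eq_cons, q₂.support_eq_cons] at htail
        simpa using (List.cons.injEq _ _ _ _ ▸ htail).1
      have : u₁ = u₂ := (hp a).injOn h₁ h₂ hu
      subst this
      exact ih q₂ htail

/-- Every closed walk in the base of a graph covering with finite
(nonempty) fiber has a multiple that lifts to a closed walk: if `p : G' → G` is a covering,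
`x` a vertex of `G` with finite fiber, `w` a closed walk based at `x`, and `x'` a point of
the fiber over `x`, then some `N`-fold concatenation of `w` (with `N ≥ 1`) lifts to a
closed walk in `G'` based at `x'`. -/
theorem stmt10 {V W : Type*} {G' : SimpleGraph V} {G : SimpleGraph W}
    (p : G' →g G) (hp : IsGraphCovering p) (x : W)
    (hfin : {y : V | p y = x}.Finite)
    (w : G.Walk x x) (x' : V) (hx' : p x' = x) :
    ∃ N : ℕ, 1 ≤ N ∧ ∃ w' : G'.Walk x' x',
      w'.map p = (walkPow w N).copy hx'.symm hx'.symm := by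
  subst hx'
  have key : ∀ a : {y : V // p y = p x'},
      ∃ (b : V) (hb : p b = p x') (w' : G'.Walk a.1 b),
        w'.map p = w.copy a.2.symm hb.symm := by
    intro a
    obtain ⟨b, hb, w', hw'⟩ := stmt10_lift_ex p hp w a.1 a.2
    exact ⟨b, hb, w', hw'⟩
  choose F hF LW hLW using key
  set f : {y : V // p y = p x'} → {y : V // p y = p x'} := fun a => ⟨F a, hF a⟩ with hf
  -- the endpoint map `f` is injective
  have hinj : Function.Injective f := by
    intro a b hab
    have hFab : F a = F b := congrArg Subtype.val hab
    have ha : ((LW a).reverse.copy hFab rfl).support.map p = w.support.reverse := by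
      have := congrArg Walk.support (hLW a)
      simp only [Walk.support_map, Walk.support_copy] at this
      simp [Walk.support_copy, Walk.support_reverse, List.map_reverse, this]
    have hb : (LW b).reverse.support.map p = w.support.reverse := by
      have := congrArg Walk.support (hLW b)
      simp only [Walk.support_map, Walk.support_copy] at this
      simp [Walk.support_reverse, List.map_reverse, this]
    exact Subtype.ext (stmt10_lift_unique p hp ((LW a).reverse.copy hFab rfl)
      ((LW b).reverse) (ha.trans hb.symm))
  haveI : Finite {y : V // p y = p x'} := hfin.to_subtype
  have hbij : Function.Bijective f := Finite.injective_iff_bijective.mp hinj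
  let e : Equiv.Perm {y : V // p y = p x'} := Equiv.ofBijective f hbij
  have hepow : ∀ (n : ℕ) (a : {y : V // p y = p x'}), (e ^ n) a = f^[n] a := by
    intro n
    induction n with
    | zero => intro a; simp
    | succ n ih =>
      intro a
      rw [pow_succ, Equiv.Perm.mul_apply, ih (e a)]
      show f^[n] (f a) = _
      rw [← Function.iterate_succ_apply, Function.iterate_succ_apply']
  -- lifts of powers of `w`
  have claim : ∀ (n : ℕ) (a : {y : V // p y = p x'}),
      ∃ w' : G'.Walk a.1 (f^[n] a).1,
        w'.map p = (walkPow w n).copy a.2.symm (f^[n] a).2.symm := by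
    intro n
    induction n with
    | zero =>
      intro a
      refine ⟨Walk.nil, ?_⟩
      simp only [Function.iterate_zero, id_eq, walkPow]
      rw [Walk.copy_nil]
      simp
    | succ n ih =>
      intro a
      obtain ⟨w₁, hw₁⟩ := ih a
      have hnext : f^[n+1] a = f (f^[n] a) := Function.iterate_succ_apply' f n a
      refine ⟨(w₁.append (LW (f^[n] a))).copy rfl (congrArg Subtype.val hnext.symm), ?_⟩
      rw [Walk.map_copy, Walk.map_append, hw₁, hLW, Walk.append_copy_copy,
        Walk.copy_copy]
      rfl
  obtain ⟨N, hN1, hfix⟩ : ∃ N : ℕ, 1 ≤ N ∧ f^[N] ⟨x', rfl⟩ = ⟨x', rfl⟩ := by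
    refine ⟨orderOf e, orderOf_pos e, ?_⟩
    rw [← hepow, pow_orderOf_eq_one e]
    rfl
  have := claim N ⟨x', rfl⟩
  rw [hfix] at this
  exact ⟨N, hN1, this⟩
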